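/- arXiv:math/0203104 — 2 statements merged into one kernel-verified Lean document; each statement's English description precedes it below -/
import Mathlib

section
/- Let k ≥ 2 and let ω : Fin k → ℝ be any weight vector with ω₂ = 2ω₁ (the remaining components ω₃,…,ω_k arbitrary). Then for every string generator γ : Fin k → ℕ with γ₁ ∈ {0,1}, the ω-weighted string satisfies T_1(S_ω(γ)) = 0. -/
open MvPolynomial Finset

/-- The weight coefficient `A_ω(α)` of Theorem 2.1 (for `α ≠ 0`):
`A_ω(α) = multinomial(α) · (Σ α_i ω_i) / (Σ α_i)`. -/
noncomputable def Aw {k : ℕ} (ω : Fin k → ℝ) (α : Fin k → ℕ) : ℝ :=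
  (Nat.multinomial Finset.univ α : ℝ) * (∑ i, (α i : ℝ) * ω i) / (∑ i, (α i : ℝ))

/-- The isobaric degree `Σ_{i=1}^k i·α_i` of an exponent vector. -/
def isoDeg {k : ℕ} (α : Fin k → ℕ) : ℕ := ∑ i, (i.1 + 1) * α i

/-- The (finite) set of exponent vectors of isobaric degree `n`. -/
def wipIndex (k n : ℕ) : Finset (Fin k → ℕ) :=
  (Fintype.piFinset fun _ : Fin k => Finset.range (n + 1)).filter fun α => isoDeg α = n

/-- The weighted isobaric polynomial `P_{n,ω} = Σ_α A_ω(α)·t^α`. -/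
noncomputable def WIP (k n : ℕ) (ω : Fin k → ℝ) : MvPolynomial (Fin k) ℝ :=
  ∑ α ∈ wipIndex k n, MvPolynomial.monomial (Finsupp.equivFunOnFinite.symm α) (Aw ω α)

/-- The operator `T_m(P) = D₁₁P − Σ_j t_j D_{2j}P − m·D₂P`. -/
noncomputable def Tm (k : ℕ) (hk : 2 ≤ k) (m : ℝ) (P : MvPolynomial (Fin k) ℝ) :
    MvPolynomial (Fin k) ℝ :=
  pderiv (⟨0, by omega⟩ : Fin k) (pderiv (⟨0, by omega⟩ : Fin k) P)
    - ∑ j : Fin k, X j * pderiv (⟨1, by omega⟩ : Fin k) (pderiv j P)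
    - C m * pderiv (⟨1, by omega⟩ : Fin k) P

/-- The `j`-th element `γ^{(j)}` of the string generated by `γ`. -/
def strElem (k : ℕ) (hk : 2 ≤ k) (γ : Fin k → ℕ) (j : ℕ) : Fin k → ℕ :=
  fun i => if i = (⟨0, by omega⟩ : Fin k) then γ i + 2 * j
    else if i = (⟨1, by omega⟩ : Fin k) then γ i - j else γ i

/-- The `ω`-weighted string generated by `γ`:
`S_ω(γ) = Σ_{j=0}^{γ₂} A_ω(γ^{(j)})·t^{γ^{(j)}}`. -/
noncomputable def strPoly (k : ℕ) (hk : 2 ≤ k) (ω : Fin k → ℝ) (γ : Fin k → ℕ) :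
    MvPolynomial (Fin k) ℝ :=
  ∑ j ∈ Finset.range (γ (⟨1, by omega⟩ : Fin k) + 1),
    MvPolynomial.monomial (Finsupp.equivFunOnFinite.symm (strElem k hk γ j))
      (Aw ω (strElem k hk γ j))

section Aux

variable {k : ℕ}

lemma Tm_sum (hk : 2 ≤ k) (m : ℝ) {ι : Type*} (s : Finset ι)
    (f : ι → MvPolynomial (Fin k) ℝ) :
    Tm k hk m (∑ j ∈ s, f j) = ∑ j ∈ s, Tm k hk m (f j) := by
  simp only [Tm, map_sum, Finset.mul_sum, Finset.sum_sub_distrib]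
  rw [Finset.sum_comm]


lemma nat_aux1 (d : Fin k →₀ ℕ) (i1 : Fin k) :
    ∑ j : Fin k, d j * (d i1 - if j = i1 then 1 else 0)
      = d i1 * ((∑ j, d j) - 1) := by
  rcases Nat.eq_zero_or_pos (d i1) with h | h
  · simp [h]
  · rw [← Finset.add_sum_erase _ _ (mem_univ i1), if_pos rfl]
    rw [Finset.sum_congr rfl (fun j hj => by
      rw [if_neg (Finset.mem_erase.1 hj).1, Nat.sub_zero]), ← Finset.sum_mul,
      ← Finset.add_sum_erase _ d (mem_univ i1)]
    set s := ∑ j ∈ univ.erase i1, d j with hs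
    have h1 : d i1 + s - 1 = (d i1 - 1) + s := by omega
    rw [h1, Nat.mul_add, Nat.mul_comm s (d i1)]


lemma Tm_one_monomial (hk : 2 ≤ k) (d : Fin k →₀ ℕ) (c : ℝ) :
    Tm k hk 1 (monomial d c) =
      monomial (d - Finsupp.single ⟨0, by omega⟩ 2)
        (c * ((d ⟨0, by omega⟩ * (d ⟨0, by omega⟩ - 1) : ℕ) : ℝ))
      - monomial (d - Finsupp.single ⟨1, by omega⟩ 1)
        (c * ((d ⟨1, by omega⟩ * ∑ j, d j : ℕ) : ℝ)) := by
  set i0 : Fin k := ⟨0, by omega⟩ with hi0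
  set i1 : Fin k := ⟨1, by omega⟩ with hi1
  rw [Tm, pderiv_monomial, pderiv_monomial]
  have key : ∀ j : Fin k, X j * pderiv i1 (pderiv j ((monomial d) c)) =
      (monomial (d - Finsupp.single i1 1))
        (c * (d j : ℝ) * ((d i1 - if j = i1 then 1 else 0 : ℕ) : ℝ)) := by
    intro j
    rw [pderiv_monomial, pderiv_monomial,
      show (X j : MvPolynomial (Fin k) ℝ) = monomial (Finsupp.single j 1) 1 from rfl,
      monomial_mul, one_mul]
    have happ : ((d - Finsupp.single j 1 : Fin k →₀ ℕ)) i1 = d i1 - if j = i1 then 1 else 0 := by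
      rw [Finsupp.tsub_apply, Finsupp.single_apply]
    rw [happ]
    rcases Nat.eq_zero_or_pos (d j * (d i1 - if j = i1 then 1 else 0)) with h | h
    · rcases Nat.mul_eq_zero.1 h with h' | h' <;> rw [h'] <;> simp
    · have hj : 0 < d j := by
        rcases Nat.eq_zero_or_pos (d j) with h0 | h0
        · rw [h0, Nat.zero_mul] at h; omega
        · exact h0
      have he : 0 < d i1 - if j = i1 then 1 else 0 := by
        rcases Nat.eq_zero_or_pos (d i1 - if j = i1 then 1 else 0) with h0 | h0
        · rw [h0, Nat.mul_zero] at h; omega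
        · exact h0
      have hexp : Finsupp.single j 1 + (d - Finsupp.single j 1 - Finsupp.single i1 1)
          = d - Finsupp.single i1 1 := by
        ext i
        simp only [Finsupp.add_apply, Finsupp.tsub_apply, Finsupp.single_apply]
        split_ifs at he ⊢ <;> subst_vars <;> omega
      rw [hexp]
  rw [Finset.sum_congr rfl (fun j _ => key j), ← map_sum]
  have hcoe : ∀ j : Fin k, c * (d j : ℝ) * ((d i1 - if j = i1 then 1 else 0 : ℕ) : ℝ)
      = c * ((d j * (d i1 - if j = i1 then 1 else 0) : ℕ) : ℝ) := by
    intro j; push_cast; ring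
  rw [Finset.sum_congr rfl (fun j _ => hcoe j), ← Finset.mul_sum, ← Nat.cast_sum,
    nat_aux1 d i1]
  -- first coefficient
  have hc1 : c * (d i0 : ℝ) * (((d - Finsupp.single i0 1 : Fin k →₀ ℕ)) i0 : ℕ) =
      c * ((d i0 * (d i0 - 1) : ℕ) : ℝ) := by
    rw [Finsupp.tsub_apply, Finsupp.single_eq_same]; push_cast [mul_assoc]; ring
  have he1 : d - Finsupp.single i0 1 - Finsupp.single i0 1 = d - Finsupp.single i0 2 := by
    rw [tsub_tsub, ← Finsupp.single_add]
  rw [hc1, he1, map_one, one_mul, pderiv_monomial, sub_sub, ← map_add]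
  congr 2
  have hle : d i1 ≤ ∑ j, d j := Finset.single_le_sum (fun _ _ => Nat.zero_le _) (mem_univ i1)
  have : d i1 * ((∑ j, d j) - 1) + d i1 = d i1 * ∑ j, d j := by
    rcases Nat.eq_zero_or_pos (∑ j, d j) with h0 | h0
    · have h1 : d i1 = 0 := by omega
      rw [h0, h1]
    · rw [← Nat.mul_succ]
      congr 1
      omega
  rw [← this]; push_cast; ring

lemma split_sum {M : Type*} [AddCommMonoid M] (hk : 2 ≤ k) (f : Fin k → M) :
    ∑ i, f i = f ⟨0, by omega⟩ + f ⟨1, by omega⟩ +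
      ∑ i ∈ (univ.erase ⟨0, by omega⟩).erase ⟨1, by omega⟩, f i := by
  rw [add_assoc, Finset.add_sum_erase _ f (by
    exact Finset.mem_erase.2 ⟨by simp [Fin.ext_iff], mem_univ _⟩),
    Finset.add_sum_erase _ f (mem_univ _)]

lemma split_prod {M : Type*} [CommMonoid M] (hk : 2 ≤ k) (f : Fin k → M) :
    ∏ i, f i = f ⟨0, by omega⟩ * f ⟨1, by omega⟩ *
      ∏ i ∈ (univ.erase ⟨0, by omega⟩).erase ⟨1, by omega⟩, f i := by
  rw [mul_assoc, Finset.mul_prod_erase _ f (by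
    exact Finset.mem_erase.2 ⟨by simp [Fin.ext_iff], mem_univ _⟩),
    Finset.mul_prod_erase _ f (mem_univ _)]

lemma strElem_at0 (hk : 2 ≤ k) (γ : Fin k → ℕ) (j : ℕ) :
    strElem k hk γ j ⟨0, by omega⟩ = γ ⟨0, by omega⟩ + 2 * j := by
  simp [strElem]

lemma strElem_at1 (hk : 2 ≤ k) (γ : Fin k → ℕ) (j : ℕ) :
    strElem k hk γ j ⟨1, by omega⟩ = γ ⟨1, by omega⟩ - j := by
  simp [strElem, Fin.ext_iff]

lemma strElem_at_other (hk : 2 ≤ k) (γ : Fin k → ℕ) (j : ℕ) (i : Fin k)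
    (h0 : i ≠ ⟨0, by omega⟩) (h1 : i ≠ ⟨1, by omega⟩) :
    strElem k hk γ j i = γ i := by
  simp [strElem, h0, h1]

lemma rest_eq (hk : 2 ≤ k) (γ : Fin k → ℕ) (j : ℕ) :
    ∀ i ∈ (univ.erase (⟨0, by omega⟩ : Fin k)).erase ⟨1, by omega⟩,
      strElem k hk γ j i = γ i := fun i hi =>
  strElem_at_other hk γ j i (Finset.mem_erase.1 (Finset.mem_erase.1 hi).2).1
    (Finset.mem_erase.1 hi).1

lemma strElem_sum (hk : 2 ≤ k) (γ : Fin k → ℕ) {j : ℕ}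
    (hj : j ≤ γ ⟨1, by omega⟩) :
    ∑ i, strElem k hk γ j i = (∑ i, γ i) + j := by
  rw [split_sum hk, split_sum hk γ, strElem_at0, strElem_at1,
    Finset.sum_congr rfl (rest_eq hk γ j)]
  have hrest : ((univ.erase (⟨0, by omega⟩ : Fin k)).erase ⟨1, by omega⟩).sum γ
      = ∑ i ∈ (univ.erase (⟨0, by omega⟩ : Fin k)).erase ⟨1, by omega⟩, γ i := rfl
  omega

lemma strElem_wsum (hk : 2 ≤ k) (ω : Fin k → ℝ)
    (hω : ω (⟨1, by omega⟩ : Fin k) = 2 * ω (⟨0, by omega⟩ : Fin k))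
    (γ : Fin k → ℕ) {j : ℕ} (hj : j ≤ γ ⟨1, by omega⟩) :
    ∑ i, (strElem k hk γ j i : ℝ) * ω i = ∑ i, (γ i : ℝ) * ω i := by
  rw [split_sum hk, split_sum hk (fun i => (γ i : ℝ) * ω i), strElem_at0, strElem_at1,
    Finset.sum_congr rfl (fun i hi => by
      rw [strElem_at_other hk γ j i (Finset.mem_erase.1 (Finset.mem_erase.1 hi).2).1
        (Finset.mem_erase.1 hi).1]),
    hω, Nat.cast_sub hj]
  push_cast
  ring

lemma multinomial_rec (hk : 2 ≤ k) (γ : Fin k → ℕ) {j : ℕ}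
    (hj : j < γ ⟨1, by omega⟩) :
    Nat.multinomial univ (strElem k hk γ (j + 1))
        * ((γ ⟨0, by omega⟩ + 2 * j + 2) * (γ ⟨0, by omega⟩ + 2 * j + 1))
      = Nat.multinomial univ (strElem k hk γ j)
        * ((γ ⟨1, by omega⟩ - j) * ((∑ i, γ i) + j + 1)) := by
  set g0 := γ (⟨0, by omega⟩ : Fin k) with hg0
  set g1 := γ (⟨1, by omega⟩ : Fin k) with hg1
  set N := ∑ i, γ i with hN
  have hsum1 : ∑ i, strElem k hk γ (j + 1) i = N + (j + 1) := strElem_sum hk γ (by omega)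
  have hsum0 : ∑ i, strElem k hk γ j i = N + j := strElem_sum hk γ (by omega)
  have hspec1 : (∏ i, (strElem k hk γ (j + 1) i).factorial)
      * Nat.multinomial univ (strElem k hk γ (j + 1)) = (N + (j + 1)).factorial := by
    rw [Nat.multinomial_spec, hsum1]
  have hspec0 : (∏ i, (strElem k hk γ j i).factorial)
      * Nat.multinomial univ (strElem k hk γ j) = (N + j).factorial := by
    rw [Nat.multinomial_spec, hsum0]
  have hprod : (∏ i, (strElem k hk γ (j + 1) i).factorial) * (g1 - j)
      = (∏ i, (strElem k hk γ j i).factorial) * ((g0 + 2 * j + 2) * (g0 + 2 * j + 1)) := by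
    rw [split_prod hk, split_prod hk (fun i => (strElem k hk γ j i).factorial),
      strElem_at0, strElem_at0, strElem_at1, strElem_at1,
      Finset.prod_congr rfl (fun i hi => congrArg Nat.factorial (rest_eq hk γ (j + 1) i hi)),
      Finset.prod_congr rfl (fun i hi => congrArg Nat.factorial (rest_eq hk γ j i hi))]
    have e1 : g0 + 2 * (j + 1) = (g0 + 2 * j + 1) + 1 := by omega
    have e2 : g1 - j = (g1 - (j + 1)) + 1 := by omega
    have e3 : g0 + 2 * j + 1 = (g0 + 2 * j) + 1 := by omega
    rw [e1, e2, Nat.factorial_succ, Nat.factorial_succ (g1 - (j+1)),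
      e3, Nat.factorial_succ (g0 + 2 * j)]
    ring
  have hpos : 0 < (∏ i, (strElem k hk γ (j + 1) i).factorial) * (g1 - j) :=
    Nat.mul_pos (Finset.prod_pos fun i _ => Nat.factorial_pos _) (by omega)
  apply Nat.eq_of_mul_eq_mul_left hpos
  calc (∏ i, (strElem k hk γ (j + 1) i).factorial) * (g1 - j)
        * (Nat.multinomial univ (strElem k hk γ (j + 1))
          * ((g0 + 2 * j + 2) * (g0 + 2 * j + 1)))
      = ((∏ i, (strElem k hk γ (j + 1) i).factorial)
          * Nat.multinomial univ (strElem k hk γ (j + 1)))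
        * ((g1 - j) * ((g0 + 2 * j + 2) * (g0 + 2 * j + 1))) := by ring
    _ = (N + (j + 1)).factorial * ((g1 - j) * ((g0 + 2 * j + 2) * (g0 + 2 * j + 1))) := by
        rw [hspec1]
    _ = ((N + j + 1) * (N + j).factorial)
        * ((g1 - j) * ((g0 + 2 * j + 2) * (g0 + 2 * j + 1))) := by
        rw [show N + (j + 1) = (N + j) + 1 from by omega, Nat.factorial_succ]
    _ = ((∏ i, (strElem k hk γ j i).factorial) * Nat.multinomial univ (strElem k hk γ j))
        * ((g1 - j) * ((g0 + 2 * j + 2) * (g0 + 2 * j + 1))) * (N + j + 1) := by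
        rw [hspec0]; ring
    _ = ((∏ i, (strElem k hk γ j i).factorial) * ((g0 + 2 * j + 2) * (g0 + 2 * j + 1)))
        * (Nat.multinomial univ (strElem k hk γ j) * ((g1 - j) * (N + j + 1))) := by ring
    _ = (∏ i, (strElem k hk γ (j + 1) i).factorial) * (g1 - j)
        * (Nat.multinomial univ (strElem k hk γ j) * ((g1 - j) * (N + j + 1))) := by
        rw [hprod]


lemma exp_rec {k : ℕ} (hk : 2 ≤ k) (γ : Fin k → ℕ) (j : ℕ) :
    Finsupp.equivFunOnFinite.symm (strElem k hk γ (j + 1))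
        - Finsupp.single (⟨0, by omega⟩ : Fin k) 2
      = Finsupp.equivFunOnFinite.symm (strElem k hk γ j)
        - Finsupp.single (⟨1, by omega⟩ : Fin k) 1 := by
  ext i
  simp only [Finsupp.tsub_apply, Finsupp.single_apply,
    Finsupp.coe_equivFunOnFinite_symm, strElem]
  split_ifs <;> subst_vars <;> simp_all [Fin.ext_iff] <;> omega

lemma coeff_rec {k : ℕ} (hk : 2 ≤ k) (ω : Fin k → ℝ)
    (hω : ω (⟨1, by omega⟩ : Fin k) = 2 * ω (⟨0, by omega⟩ : Fin k))
    (γ : Fin k → ℕ) {j : ℕ} (hj : j < γ ⟨1, by omega⟩) :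
    Aw ω (strElem k hk γ (j + 1))
        * ((strElem k hk γ (j + 1) ⟨0, by omega⟩
            * (strElem k hk γ (j + 1) ⟨0, by omega⟩ - 1) : ℕ) : ℝ)
      = Aw ω (strElem k hk γ j)
        * ((strElem k hk γ j ⟨1, by omega⟩ * ∑ i, strElem k hk γ j i : ℕ) : ℝ) := by
  have hle : γ ⟨1, by omega⟩ ≤ ∑ i, γ i :=
    Finset.single_le_sum (fun _ _ => Nat.zero_le _) (mem_univ _)
  have hS1 : ∑ i, (strElem k hk γ (j + 1) i : ℝ) = (((∑ i, γ i) + (j + 1) : ℕ) : ℝ) := by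
    rw [← Nat.cast_sum, strElem_sum hk γ (by omega)]
  have hS0 : ∑ i, (strElem k hk γ j i : ℝ) = (((∑ i, γ i) + j : ℕ) : ℝ) := by
    rw [← Nat.cast_sum, strElem_sum hk γ (by omega)]
  have hW1 := strElem_wsum hk ω hω γ (show j + 1 ≤ γ ⟨1, by omega⟩ by omega)
  have hW0 := strElem_wsum hk ω hω γ (le_of_lt hj)
  have h1 := congrArg (Nat.cast (R := ℝ)) (multinomial_rec hk γ hj)
  push_cast [Nat.cast_sub hj.le] at h1
  rw [Aw, Aw, strElem_at0, strElem_at1, strElem_sum hk γ hj.le, hS1, hS0, hW1, hW0]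
  have hN : (1 : ℝ) ≤ ∑ i, ((γ i : ℕ) : ℝ) := by
    have h2 : 1 ≤ ∑ i, γ i := by omega
    calc (1 : ℝ) = ((1 : ℕ) : ℝ) := by norm_num
      _ ≤ ((∑ i, γ i : ℕ) : ℝ) := by exact_mod_cast h2
      _ = ∑ i, ((γ i : ℕ) : ℝ) := Nat.cast_sum _ _
  have hj0 : (0 : ℝ) ≤ (j : ℝ) := Nat.cast_nonneg j
  have hD0 : (((∑ i, γ i) + j : ℕ) : ℝ) ≠ 0 := by
    push_cast; intro hcon; nlinarith
  have hD1 : (((∑ i, γ i) + (j + 1) : ℕ) : ℝ) ≠ 0 := by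
    push_cast; intro hcon; nlinarith
  push_cast [Nat.cast_sub hj.le, Nat.cast_sub (show 1 ≤ γ ⟨0, by omega⟩ + 2 * (j + 1) by omega)]
    at hD0 hD1 ⊢
  field_simp
  linear_combination (∑ i, ((γ i : ℕ) : ℝ) * ω i) * h1

end Aux

/-- For any weight vector `ω` with `ω₂ = 2ω₁` (remaining components arbitrary),
every `ω`-weighted string is annihilated by `T_1`. -/
theorem string_in_ker_T1_of_weight (k : ℕ) (hk : 2 ≤ k) (ω : Fin k → ℝ)
    (hω : ω (⟨1, by omega⟩ : Fin k) = 2 * ω (⟨0, by omega⟩ : Fin k))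
    (γ : Fin k → ℕ)
    (hγ : γ (⟨0, by omega⟩ : Fin k) = 0 ∨ γ (⟨0, by omega⟩ : Fin k) = 1) :
    Tm k hk 1 (strPoly k hk ω γ) = 0 := by
  have hle : γ ⟨1, by omega⟩ ≤ ∑ i, γ i :=
    Finset.single_le_sum (fun _ _ => Nat.zero_le _) (mem_univ _)
  rw [strPoly, Tm_sum]
  have hterm : ∀ j : ℕ,
      Tm k hk 1 ((monomial (Finsupp.equivFunOnFinite.symm (strElem k hk γ j)))
        (Aw ω (strElem k hk γ j)))
      = (monomial (Finsupp.equivFunOnFinite.symm (strElem k hk γ j)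
            - Finsupp.single ⟨0, by omega⟩ 2))
          (Aw ω (strElem k hk γ j) * ((strElem k hk γ j ⟨0, by omega⟩
            * (strElem k hk γ j ⟨0, by omega⟩ - 1) : ℕ) : ℝ))
        - (monomial (Finsupp.equivFunOnFinite.symm (strElem k hk γ j)
            - Finsupp.single ⟨1, by omega⟩ 1))
          (Aw ω (strElem k hk γ j) * ((strElem k hk γ j ⟨1, by omega⟩
            * ∑ i, strElem k hk γ j i : ℕ) : ℝ)) := by
    intro j
    rw [Tm_one_monomial hk]
    simp only [Finsupp.coe_equivFunOnFinite_symm]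
  rw [Finset.sum_congr rfl (fun j _ => hterm j), Finset.sum_sub_distrib, sub_eq_zero,
    Finset.sum_range_succ' _ (γ ⟨1, by omega⟩), Finset.sum_range_succ]
  have hA0 : (monomial (Finsupp.equivFunOnFinite.symm (strElem k hk γ 0)
        - Finsupp.single ⟨0, by omega⟩ 2))
      (Aw ω (strElem k hk γ 0) * ((strElem k hk γ 0 ⟨0, by omega⟩
        * (strElem k hk γ 0 ⟨0, by omega⟩ - 1) : ℕ) : ℝ)) = 0 := by
    rw [strElem_at0, show γ ⟨0, by omega⟩ + 2 * 0 = γ ⟨0, by omega⟩ from by omega]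
    rcases hγ with h | h <;> rw [h] <;> norm_num
  have hBlast : (monomial (Finsupp.equivFunOnFinite.symm (strElem k hk γ (γ ⟨1, by omega⟩))
        - Finsupp.single ⟨1, by omega⟩ 1))
      (Aw ω (strElem k hk γ (γ ⟨1, by omega⟩))
        * ((strElem k hk γ (γ ⟨1, by omega⟩) ⟨1, by omega⟩
          * ∑ i, strElem k hk γ (γ ⟨1, by omega⟩) i : ℕ) : ℝ)) = 0 := by
    rw [strElem_at1, Nat.sub_self]
    norm_num
  rw [hA0, hBlast, add_zero, add_zero]
  refine Finset.sum_congr rfl fun j hj => ?_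
  rw [exp_rec hk γ j, coeff_rec hk ω hω γ (Finset.mem_range.1 hj)]
end

section
/- Let k ≥ 3, m : ℝ, and let ω : Fin k → ℝ be a weight vector with (ω₁, ω₂) ≠ (0, 0). If T_m(P_{n,ω}) = 0 for every n ≥ 1 (in particular for n = 2 and n = 3), then either m = 1 and 2ω₁ = ω₂, or m = 2 and ω₁ = ω₂. -/
open MvPolynomial Finset

lemma coeff_pderiv' {σ : Type*} [DecidableEq σ] (i : σ) (P : MvPolynomial σ ℝ) (d : σ →₀ ℕ) :
    coeff d (pderiv i P) = ((d i : ℝ) + 1) * coeff (d + Finsupp.single i 1) P := by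
  induction P using MvPolynomial.induction_on' with
  | add p q hp hq => simp [hp, hq, mul_add]
  | monomial s a =>
    rw [pderiv_monomial, coeff_monomial, coeff_monomial]
    split_ifs with h1 h2 h2
    · subst h2
      have hv : ((d + Finsupp.single i 1 : σ →₀ ℕ)) i = d i + 1 := by simp
      rw [hv]; push_cast; ring
    · have hsi : s i = 0 := by
        by_contra hne
        apply h2
        ext j
        have hj : ((s - Finsupp.single i 1 : σ →₀ ℕ)) j = d j := by rw [h1]
        simp only [Finsupp.coe_tsub, Pi.sub_apply, Finsupp.single_apply] at hj
        simp only [Finsupp.add_apply, Finsupp.single_apply]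
        rcases eq_or_ne i j with rfl | hij
        · rw [if_pos rfl] at hj ⊢; omega
        · rw [if_neg hij] at hj ⊢; omega
      simp [hsi]
    · exfalso; apply h1; subst h2; ext j
      simp only [Finsupp.coe_tsub, Pi.sub_apply, Finsupp.add_apply, Finsupp.single_apply]
      omega
    · ring

lemma isoDeg_apply_le {k : ℕ} (α : Fin k → ℕ) (i : Fin k) : α i ≤ isoDeg α := by
  calc α i ≤ (i.1 + 1) * α i := by nlinarith
  _ ≤ isoDeg α := Finset.single_le_sum (f := fun j => (j.1+1) * α j) (fun _ _ => Nat.zero_le _) (mem_univ i)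

lemma coeff_WIP (k n : ℕ) (ω : Fin k → ℝ) (d : Fin k →₀ ℕ) :
    coeff d (WIP k n ω) = if isoDeg ⇑d = n then Aw ω ⇑d else 0 := by
  have hcoe : Finsupp.equivFunOnFinite d = ⇑d := rfl
  unfold WIP
  rw [MvPolynomial.coeff_sum]
  simp only [coeff_monomial, Equiv.symm_apply_eq]
  rw [Finset.sum_ite_eq' (wipIndex k n) (Finsupp.equivFunOnFinite d) (fun α => Aw ω α),
    hcoe]
  by_cases hd : isoDeg ⇑d = n
  · rw [if_pos, if_pos hd]
    unfold wipIndex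
    rw [Finset.mem_filter]
    refine ⟨?_, hd⟩
    rw [Fintype.mem_piFinset]
    intro i
    rw [Finset.mem_range]
    have := isoDeg_apply_le (⇑d) i
    omega
  · rw [if_neg, if_neg hd]
    unfold wipIndex
    rw [Finset.mem_filter]
    tauto

lemma multinomial_single {k : ℕ} (j : Fin k) (c : ℕ) :
    Nat.multinomial Finset.univ ⇑(Finsupp.single j c) = 1 := by
  rw [Nat.multinomial]
  have h1 : ∑ i, (Finsupp.single j c : Fin k →₀ ℕ) i = c := by
    simp [Finsupp.single_apply, Finset.sum_ite_eq]
  have h2 : ∏ i, Nat.factorial ((Finsupp.single j c : Fin k →₀ ℕ) i) = Nat.factorial c := by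
    simp [Finsupp.single_apply, apply_ite Nat.factorial, Finset.prod_ite_eq]
  rw [h1, h2]
  exact Nat.div_self (Nat.factorial_pos c)

lemma sum_single_cast {k : ℕ} (j : Fin k) (c : ℕ) :
    ∑ i, (((Finsupp.single j c : Fin k →₀ ℕ) i : ℕ) : ℝ) = c := by
  simp [Finsupp.single_apply, apply_ite (Nat.cast : ℕ → ℝ), Finset.sum_ite_eq]

lemma sum_single_mul {k : ℕ} (ω : Fin k → ℝ) (j : Fin k) (c : ℕ) :
    ∑ i, (((Finsupp.single j c : Fin k →₀ ℕ) i : ℕ) : ℝ) * ω i = c * ω j := by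
  simp [Finsupp.single_apply, apply_ite (Nat.cast : ℕ → ℝ), ite_mul, Finset.sum_ite_eq]

lemma Aw_single {k : ℕ} (ω : Fin k → ℝ) (j : Fin k) (c : ℕ) (hc : c ≠ 0) :
    Aw ω ⇑(Finsupp.single j c) = ω j := by
  rw [Aw, multinomial_single, sum_single_cast, sum_single_mul]
  have : (c : ℝ) ≠ 0 := Nat.cast_ne_zero.mpr hc
  field_simp
  simp

lemma isoDeg_single {k : ℕ} (j : Fin k) (c : ℕ) :
    isoDeg ⇑(Finsupp.single j c) = (j.1 + 1) * c := by
  simp [isoDeg, Finsupp.single_apply, mul_ite, Finset.sum_ite_eq]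

lemma isoDeg_pair {k : ℕ} (a b : Fin k) (c e : ℕ) :
    isoDeg ⇑(Finsupp.single a c + Finsupp.single b e : Fin k →₀ ℕ) = (a.1 + 1) * c + (b.1 + 1) * e := by
  simp [isoDeg, Finsupp.add_apply, Finsupp.single_apply, mul_ite, mul_add,
    Finset.sum_add_distrib, Finset.sum_ite_eq]

lemma Aw_pair {k : ℕ} (ω : Fin k → ℝ) (a b : Fin k) (hab : a ≠ b) :
    Aw ω ⇑(Finsupp.single a 1 + Finsupp.single b 1 : Fin k →₀ ℕ) = ω a + ω b := by
  have hmul : Nat.multinomial Finset.univ ⇑(Finsupp.single a 1 + Finsupp.single b 1 : Fin k →₀ ℕ) = 2 := by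
    rw [Nat.multinomial]
    have h1 : ∑ i, (Finsupp.single a 1 + Finsupp.single b 1 : Fin k →₀ ℕ) i = 2 := by
      simp [Finsupp.add_apply, Finsupp.single_apply, Finset.sum_add_distrib, Finset.sum_ite_eq]
    have h2 : ∏ i, Nat.factorial ((Finsupp.single a 1 + Finsupp.single b 1 : Fin k →₀ ℕ) i) = 1 := by
      apply Finset.prod_eq_one
      intro i _
      simp only [Finsupp.add_apply, Finsupp.single_apply]
      rcases eq_or_ne a i with rfl | ha
      · rw [if_pos rfl, if_neg (Ne.symm hab)]; rfl
      · rw [if_neg ha]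
        rcases eq_or_ne b i with rfl | hb
        · rw [if_pos rfl]; rfl
        · rw [if_neg hb]; rfl
    rw [h1, h2]
    rfl
  have hs1 : ∑ i, (((Finsupp.single a 1 + Finsupp.single b 1 : Fin k →₀ ℕ) i : ℕ) : ℝ) = 2 := by
    simp [Finsupp.add_apply, Finsupp.single_apply, apply_ite (Nat.cast : ℕ → ℝ),
      Finset.sum_add_distrib, Finset.sum_ite_eq]
    norm_num
  have hs2 : ∑ i, (((Finsupp.single a 1 + Finsupp.single b 1 : Fin k →₀ ℕ) i : ℕ) : ℝ) * ω i
      = ω a + ω b := by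
    simp [Finsupp.add_apply, Finsupp.single_apply, apply_ite (Nat.cast : ℕ → ℝ), ite_mul,
      add_mul, Finset.sum_add_distrib, Finset.sum_ite_eq]
  rw [Aw, hmul, hs1, hs2]
  norm_num

/-- Proposition 4.1: if the whole weighted sequence `P_{n,ω}` (with `(ω₁,ω₂) ≠ (0,0)`)
is annihilated by `T_m`, then `m = 1` and `2ω₁ = ω₂`, or `m = 2` and `ω₁ = ω₂`. -/
theorem weight_dichotomy (k : ℕ) (hk : 3 ≤ k) (m : ℝ) (ω : Fin k → ℝ)
    (hω : ¬(ω (⟨0, by omega⟩ : Fin k) = 0 ∧ ω (⟨1, by omega⟩ : Fin k) = 0))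
    (h : ∀ n, 1 ≤ n → Tm k (by omega) m (WIP k n ω) = 0) :
    (m = 1 ∧ 2 * ω (⟨0, by omega⟩ : Fin k) = ω (⟨1, by omega⟩ : Fin k)) ∨
      (m = 2 ∧ ω (⟨0, by omega⟩ : Fin k) = ω (⟨1, by omega⟩ : Fin k)) := by
  have hk0 : 0 < k := by omega
  have hk1 : 1 < k := by omega
  set e0 : Fin k := ⟨0, hk0⟩ with he0
  set e1 : Fin k := ⟨1, hk1⟩ with he1
  have hne : e0 ≠ e1 := by
    intro hc
    have := congrArg Fin.val hc
    simp [he0, he1] at this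
  -- Equation 1 : 2 ω₁ - m ω₂ = 0
  have E1 : 2 * ω e0 - m * ω e1 = 0 := by
    have H := congrArg (coeff (0 : Fin k →₀ ℕ)) (h 2 (by norm_num))
    rw [MvPolynomial.coeff_zero] at H
    rw [Tm, coeff_sub, coeff_sub, coeff_C_mul] at H
    rw [coeff_pderiv', coeff_pderiv', coeff_pderiv'] at H
    rw [MvPolynomial.coeff_sum] at H
    rw [Finset.sum_congr rfl (fun j _ => by
      rw [coeff_X_mul']
      simp : ∀ j ∈ Finset.univ, coeff 0 (X j * pderiv e1 (pderiv j (WIP k 2 ω))) = 0)] at H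
    rw [Finset.sum_const_zero] at H
    have hidx : ((0 : Fin k →₀ ℕ) + Finsupp.single e0 1 + Finsupp.single e0 1)
        = Finsupp.single e0 2 := by rw [zero_add, ← Finsupp.single_add]
    rw [hidx] at H
    simp only [zero_add] at H
    rw [coeff_WIP, coeff_WIP, isoDeg_single, isoDeg_single] at H
    rw [Aw_single ω _ 2 (by norm_num), Aw_single ω _ 1 (by norm_num)] at H
    simp only [Finsupp.coe_zero, Pi.zero_apply, Finsupp.single_eq_same, he0, he1] at H
    norm_num at H
    linarith [H]
  -- Equation 2 : 6 ω₁ - (ω₁+ω₂) - m (ω₁+ω₂) = 0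
  have E2 : 6 * ω e0 - (ω e0 + ω e1) - m * (ω e0 + ω e1) = 0 := by
    have H := congrArg (coeff (Finsupp.single e0 1)) (h 3 (by norm_num))
    rw [MvPolynomial.coeff_zero] at H
    rw [Tm, coeff_sub, coeff_sub, coeff_C_mul] at H
    rw [coeff_pderiv', coeff_pderiv', coeff_pderiv'] at H
    rw [MvPolynomial.coeff_sum] at H
    simp only [coeff_X_mul', Finsupp.support_single_ne_zero _ (one_ne_zero),
      Finset.mem_singleton] at H
    rw [Finset.sum_ite_eq' Finset.univ e0] at H
    simp only [Finset.mem_univ, if_true] at H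
    have hz : Finsupp.single e0 1 - Finsupp.single e0 1 = (0 : Fin k →₀ ℕ) := by
      ext i; simp
    rw [hz, coeff_pderiv', coeff_pderiv'] at H
    have h3idx : (Finsupp.single e0 1 + Finsupp.single e0 1 + Finsupp.single e0 1)
        = Finsupp.single e0 (3:ℕ) := by
      rw [← Finsupp.single_add, ← Finsupp.single_add]
    rw [h3idx] at H
    simp only [zero_add] at H
    rw [coeff_WIP, coeff_WIP, coeff_WIP] at H
    rw [isoDeg_single, isoDeg_pair, isoDeg_pair] at H
    rw [Aw_single ω _ 3 (by norm_num), Aw_pair ω _ _ (Ne.symm hne), Aw_pair ω _ _ hne] at H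
    simp only [Finsupp.coe_zero, Pi.zero_apply, Finsupp.single_eq_same,
      Finsupp.single_apply, he0, he1] at H
    norm_num at H
    linarith [H]
  have key : ω e0 * ((m - 1) * (m - 2)) = 0 := by
    linear_combination (1 + m) * E1 - m * E2
  rcases mul_eq_zero.mp key with hw0 | hm12
  · exfalso
    have hw1 : ω e1 ≠ 0 := fun hh => hω ⟨hw0, hh⟩
    have hm : m = 0 := by
      rcases mul_eq_zero.mp (show m * ω e1 = 0 by linarith [E1, hw0]) with h' | h'
      · exact h'
      · exact absurd h' hw1
    apply hw1
    rw [hw0, hm] at E2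
    linarith [E2]
  · rcases mul_eq_zero.mp hm12 with hm | hm
    · left
      have hm' : m = 1 := by linarith [hm]
      refine ⟨hm', ?_⟩
      rw [hm'] at E1
      linarith [E1]
    · right
      have hm' : m = 2 := by linarith [hm]
      refine ⟨hm', ?_⟩
      rw [hm'] at E1
      linarith [E1]
end
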